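/- Let K ≥ 1 and k = (K−1)/(K+1). For A ∈ ℝ²ˣ² with conformal coordinates (a₊, a₋), the condition ‖A − R‖² ≤ K det(A − R) for all R ∈ SO(2) is equivalent to |a₋| ≤ k·|1 − |a₊||. -/

import Mathlib

open Matrix

/-- Operator (ℓ²→ℓ²) norm of a real 2×2 matrix. -/
noncomputable def opNorm (A : Matrix (Fin 2) (Fin 2) ℝ) : ℝ :=
  ‖Matrix.toEuclideanCLM (𝕜 := ℝ) A‖

/-- The real 2×2 matrix corresponding, under the identification ℝ² ≅ ℂ, to the
real-linear map `z ↦ a₊ z + a₋ conj z`. -/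
noncomputable def toMat (ap am : ℂ) : Matrix (Fin 2) (Fin 2) ℝ :=
  !![ap.re + am.re, -ap.im + am.im; ap.im + am.im, ap.re - am.re]

/-- The rotation group SO(2) as a set of 2×2 real matrices. -/
def SO2 : Set (Matrix (Fin 2) (Fin 2) ℝ) := {R | R * Rᵀ = 1 ∧ R.det = 1}

lemma det_toMat (b c : ℂ) : (toMat b c).det = ‖b‖ ^2 - ‖c‖ ^2 := by
  rw [Matrix.det_fin_two]
  simp [toMat, Complex.sq_norm, Complex.normSq_apply]
  ring

lemma toMat_sub (b c w : ℂ) : toMat b c - toMat w 0 = toMat (b - w) c := by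
  ext i j
  fin_cases i <;> fin_cases j <;> simp [toMat] <;> ring

lemma toMat_mulVec (b c z : ℂ) :
    (toMat b c).mulVec ![z.re, z.im] =
      ![(b*z + c*(starRingEnd ℂ) z).re, (b*z + c*(starRingEnd ℂ) z).im] := by
  funext i
  fin_cases i <;>
    simp [toMat, Matrix.mulVec, dotProduct, Fin.sum_univ_two,
      Complex.add_re, Complex.add_im, Complex.mul_re, Complex.mul_im] <;> ring

lemma euclid_norm (z : ℂ) :
    ‖(WithLp.equiv 2 (Fin 2 → ℝ)).symm ![z.re, z.im]‖ = ‖z‖ := by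
  rw [EuclideanSpace.norm_eq, Complex.norm_def, Complex.normSq_apply]
  simp [Fin.sum_univ_two, sq_abs]
  ring_nf

lemma clm_apply (b c z : ℂ) :
    Matrix.toEuclideanCLM (𝕜 := ℝ) (toMat b c) ((WithLp.equiv 2 (Fin 2 → ℝ)).symm ![z.re, z.im])
      = (WithLp.equiv 2 (Fin 2 → ℝ)).symm
          ![(b*z + c*(starRingEnd ℂ) z).re, (b*z + c*(starRingEnd ℂ) z).im] := by
  rw [← toMat_mulVec]; rfl

lemma myabs_add_le (b c z : ℂ) :
    ‖b*z + c*(starRingEnd ℂ) z‖ ≤ (‖b‖ + ‖c‖) * ‖z‖ := by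
  calc ‖b*z + c*(starRingEnd ℂ) z‖
      ≤ ‖b*z‖ + ‖c*(starRingEnd ℂ) z‖ := norm_add_le _ _
    _ = (‖b‖ + ‖c‖) * ‖z‖ := by
        simp [norm_mul, Complex.norm_conj]; ring

lemma exists_max (b c : ℂ) : ∃ u : ℂ, ‖u‖ = 1 ∧
    ‖b*u + c*(starRingEnd ℂ) u‖ = ‖b‖ + ‖c‖ := by
  by_cases hb : b = 0
  · exact ⟨1, by simp, by simp [hb]⟩
  by_cases hc : c = 0
  · exact ⟨1, by simp, by simp [hc]⟩
  set r := ‖b‖ with hr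
  set s := ‖c‖ with hs
  have hab : 0 < r := norm_pos_iff.mpr hb
  have hac : 0 < s := norm_pos_iff.mpr hc
  obtain ⟨u, hu⟩ := IsAlgClosed.exists_pow_nat_eq
    ((starRingEnd ℂ) b * c / ((r * s : ℝ) : ℂ)) zero_lt_two
  have habs_u2 : ‖u ^ 2‖ = 1 := by
    rw [hu, norm_div, norm_mul, Complex.norm_conj, Complex.norm_real, Real.norm_eq_abs,
      abs_of_pos (by positivity)]
    field_simp
    rw [hr, hs]
  have hu1 : ‖u‖ = 1 := by
    rw [norm_pow] at habs_u2
    nlinarith [norm_nonneg u]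
  have hconj : (starRingEnd ℂ) u = u⁻¹ := by
    rw [Complex.inv_def, Complex.normSq_eq_norm_sq, hu1]
    simp
  refine ⟨u, hu1, ?_⟩
  have hu0 : u ≠ 0 := by
    intro h; rw [h] at hu1; simp at hu1
  have key : b*u + c*(starRingEnd ℂ) u = u⁻¹ * (b * u^2 + c) := by
    rw [hconj]; field_simp
  have hb2 : b * (starRingEnd ℂ) b = ((r : ℂ))^2 := by
    rw [Complex.mul_conj, Complex.normSq_eq_norm_sq]; push_cast; ring
  have hmain : b * ((starRingEnd ℂ) b * c / ((r * s : ℝ) : ℂ)) + c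
      = (((r + s)/s : ℝ) : ℂ) * c := by
    have hsc : ((s : ℂ)) ≠ 0 := by
      simpa using hac.ne'
    have hrc : ((r : ℂ)) ≠ 0 := by
      simpa using hab.ne'
    rw [← mul_div_assoc, ← mul_assoc, hb2]
    push_cast
    field_simp
  rw [key, norm_mul, norm_inv, hu1, inv_one, one_mul, hu, hmain,
    norm_mul, Complex.norm_real, Real.norm_eq_abs, abs_of_pos (by positivity), ← hs]
  field_simp

lemma x_repr (x : EuclideanSpace ℝ (Fin 2)) :
    x = (WithLp.equiv 2 (Fin 2 → ℝ)).symm ![(⟨x 0, x 1⟩ : ℂ).re, (⟨x 0, x 1⟩ : ℂ).im] := by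
  ext i
  fin_cases i <;> rfl

lemma opNorm_toMat (b c : ℂ) : opNorm (toMat b c) = ‖b‖ + ‖c‖ := by
  apply le_antisymm
  · apply ContinuousLinearMap.opNorm_le_bound _ (by positivity)
    intro x
    set z : ℂ := ⟨x 0, x 1⟩ with hz
    rw [x_repr x, clm_apply, euclid_norm, euclid_norm]
    exact myabs_add_le b c z
  · obtain ⟨u, hu1, hu2⟩ := exists_max b c
    have h := (Matrix.toEuclideanCLM (𝕜 := ℝ) (toMat b c)).le_opNorm
      ((WithLp.equiv 2 (Fin 2 → ℝ)).symm ![u.re, u.im])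
    rw [clm_apply, euclid_norm, euclid_norm, hu1, hu2, mul_one] at h
    exact h

lemma mem_SO2_iff (R : Matrix (Fin 2) (Fin 2) ℝ) :
    R ∈ SO2 ↔ ∃ w : ℂ, ‖w‖ = 1 ∧ R = toMat w 0 := by
  constructor
  · rintro ⟨h1, h2⟩
    have e00 := congrFun (congrFun h1 0) 0
    have e01 := congrFun (congrFun h1 0) 1
    have e11 := congrFun (congrFun h1 1) 1
    simp [Matrix.mul_apply, Fin.sum_univ_two, Matrix.one_apply] at e00 e01 e11
    rw [Matrix.det_fin_two] at h2
    have hd : R 1 1 = R 0 0 ∧ R 1 0 = -(R 0 1) := by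
      constructor <;> nlinarith [sq_nonneg (R 1 1 - R 0 0), sq_nonneg (R 1 0 + R 0 1)]
    refine ⟨⟨R 0 0, -(R 0 1)⟩, ?_, ?_⟩
    · rw [Complex.norm_def, Complex.normSq_apply]
      simp only
      rw [show R 0 0 * R 0 0 + -(R 0 1) * -(R 0 1) = 1 by nlinarith]
      exact Real.sqrt_one
    · ext i j
      fin_cases i <;> fin_cases j <;> simp [toMat] <;> simp [hd.1, hd.2]
  · rintro ⟨w, hw, rfl⟩
    have hn : w.re * w.re + w.im * w.im = 1 := by
      have := Complex.sq_norm w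
      rw [hw, Complex.normSq_apply] at this
      nlinarith
    constructor
    · ext i j
      fin_cases i <;> fin_cases j <;>
        simp [toMat, Matrix.mul_apply, Fin.sum_univ_two, Matrix.one_apply, Matrix.transpose_apply, Matrix.vecHead, Matrix.vecTail] <;>
        nlinarith
    · rw [Matrix.det_fin_two]
      simp [toMat]
      nlinarith

lemma real_iff (K t m : ℝ) (hK : 1 ≤ K) (ht : 0 ≤ t) (hm : 0 ≤ m) :
    (t + m)^2 ≤ K * (t^2 - m^2) ↔ m * (K + 1) ≤ t * (K - 1) := by
  constructor
  · intro h
    rcases eq_or_lt_of_le (by positivity : (0:ℝ) ≤ t + m) with h0 | h0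
    · have ht0 : t = 0 := by nlinarith
      have hm0 : m = 0 := by nlinarith
      rw [ht0, hm0]; simp
    · have h2 : (t + m) * (t + m) ≤ (K * (t - m)) * (t + m) := by nlinarith
      have h3 := le_of_mul_le_mul_right h2 h0
      nlinarith
  · intro h
    nlinarith [mul_nonneg (by linarith : (0:ℝ) ≤ t + m)
      (by linarith : (0:ℝ) ≤ t * (K - 1) - m * (K + 1))]

theorem stmt2 (K : ℝ) (hK : 1 ≤ K) (ap am : ℂ) :
    (∀ R ∈ SO2, opNorm (toMat ap am - R) ^ 2 ≤ K * (toMat ap am - R).det) ↔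
      ‖am‖ ≤ (K - 1) / (K + 1) * |1 - ‖ap‖| := by
  have hK1 : (0:ℝ) < K + 1 := by linarith
  set m := ‖am‖ with hm
  have hm0 : 0 ≤ m := norm_nonneg am
  constructor
  · intro h
    -- choose the optimal rotation
    obtain ⟨w, hw1, hww⟩ : ∃ w : ℂ, ‖w‖ = 1 ∧
        ‖ap - w‖ = |1 - ‖ap‖| := by
      by_cases hap : ap = 0
      · exact ⟨1, by simp, by simp [hap]⟩
      · have hr : 0 < ‖ap‖ := norm_pos_iff.mpr hap
        refine ⟨ap / ((‖ap‖ : ℝ) : ℂ), ?_, ?_⟩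
        · rw [norm_div, Complex.norm_real, Real.norm_eq_abs, abs_of_pos hr, div_self hr.ne']
        · have : ap - ap / ((‖ap‖ : ℝ) : ℂ)
              = ap * (((‖ap‖ - 1) / ‖ap‖ : ℝ) : ℂ) := by
            have : ((‖ap‖ : ℝ) : ℂ) ≠ 0 := by simpa using hr.ne'
            push_cast
            field_simp
          rw [this, norm_mul, Complex.norm_real, Real.norm_eq_abs, abs_div,
            abs_of_pos hr, mul_comm, div_mul_cancel₀ _ hr.ne', abs_sub_comm]
    have hR := h (toMat w 0) ((mem_SO2_iff _).2 ⟨w, hw1, rfl⟩)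
    rw [toMat_sub, opNorm_toMat, det_toMat, hww] at hR
    have := (real_iff K _ m hK (abs_nonneg _) hm0).1 hR
    rw [div_mul_eq_mul_div, le_div_iff₀ hK1]
    linarith
  · intro h R hR
    obtain ⟨w, hw1, rfl⟩ := (mem_SO2_iff R).1 hR
    rw [toMat_sub, opNorm_toMat, det_toMat]
    set t := ‖ap - w‖ with htdef
    have ht0 : 0 ≤ t := norm_nonneg _
    have hlow : |1 - ‖ap‖| ≤ t := by
      have := abs_norm_sub_norm_le ap w
      rw [hw1] at this
      rw [abs_sub_comm]
      exact this
    refine (real_iff K t m hK ht0 hm0).2 ?_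
    rw [div_mul_eq_mul_div, le_div_iff₀ hK1] at h
    nlinarith
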